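/- Let d = 2 and let Q_1 = [0,1/5]^2 ∈ Q_1^(2)(F^(2)). Then for every real p > 1 and every integer m ≥ 1, E_{p,m}(Q_1, Γ(Q_1)^c) ≥ 2^m (5^m + 1)^{1−p}. -/

import Mathlib

open Set MeasureTheory Filter
open scoped Classical

noncomputable section

/-- Points of `ℝ^d` with the Euclidean metric. -/
abbrev Pt (d : ℕ) := EuclideanSpace ℝ (Fin d)

/-- The closed cube `∏ [(lᵢ-1)/5ⁿ, lᵢ/5ⁿ]`. -/
def cube (d n : ℕ) (l : Fin d → ℕ) : Set (Pt d) :=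
  {x | ∀ i, ((l i : ℝ) - 1) / 5 ^ n ≤ x i ∧ x i ≤ (l i : ℝ) / 5 ^ n}

/-- The collection `𝒬ₙ⁽ᵈ⁾` of level-`n` cubes. -/
def Qcol (d n : ℕ) : Set (Set (Pt d)) :=
  {Q | ∃ l : Fin d → ℕ, (∀ i, 1 ≤ l i ∧ l i ≤ 5 ^ n) ∧ Q = cube d n l}

/-- `𝒬ₙ⁽ᵈ⁾(A)`: the level-`n` cubes whose interior meets `A`. -/
def QcolOf (d n : ℕ) (A : Set (Pt d)) : Set (Set (Pt d)) :=
  {Q | Q ∈ Qcol d n ∧ (interior Q ∩ A).Nonempty}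

/-- `F₀⁽ᵈ⁾ = [0,1]^d`. -/
def F0 (d : ℕ) : Set (Pt d) := {x | ∀ i, x i ∈ Icc (0 : ℝ) 1}

/-- `F₁⁽ᵈ⁾`. -/
def F1 (d : ℕ) : Set (Pt d) :=
  F0 d \ ⋃ i : Fin d, {x | (∀ j, j < i → x j ∈ Ioo (2/5 : ℝ) (3/5)) ∧
    x i ∈ Ioo (1/5 : ℝ) (2/5) ∪ Ioo (3/5 : ℝ) (4/5) ∧
    ∀ j, i < j → x j ∈ Ioo (2/5 : ℝ) (3/5)}

/-- The orientation-preserving affine map from `[0,1]^d` onto the cube indexed by `l` at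
level `n`. -/
def psi (d n : ℕ) (l : Fin d → ℕ) (x : Pt d) : Pt d :=
  WithLp.toLp 2 (fun i => ((l i : ℝ) - 1) / 5 ^ n + x i / 5 ^ n)

/-- The approximations `Fₙ⁽ᵈ⁾`. -/
def Fn (d : ℕ) : ℕ → Set (Pt d)
  | 0 => F0 d
  | 1 => F1 d
  | n + 2 => ⋃ l ∈ {l : Fin d → ℕ | cube d 1 l ∈ QcolOf d 1 (F1 d)}, psi d 1 l '' Fn d (n + 1)

/-- The fractal `F⁽ᵈ⁾`. -/
def Fset (d : ℕ) : Set (Pt d) := ⋂ n, Fn d n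

/-- `G₁⁽ᵈ⁾`: union of the level-1 cubes of `F₁⁽ᵈ⁾` which meet the boundary of `[0,1]^d`. -/
def G1 (d : ℕ) : Set (Pt d) :=
  ⋃ Q ∈ {Q | Q ∈ QcolOf d 1 (F1 d) ∧ (Q ∩ frontier (F0 d)).Nonempty}, Q

/-- The approximations `Gₙ⁽ᵈ⁾`. -/
def Gn (d : ℕ) : ℕ → Set (Pt d)
  | 0 => F0 d
  | 1 => G1 d
  | n + 2 => ⋃ l ∈ {l : Fin d → ℕ | cube d 1 l ∈ QcolOf d 1 (G1 d)}, psi d 1 l '' Gn d (n + 1)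

/-- The boundary fractal `G⁽ᵈ⁾ = [0,1]^d ∩ ⋂_{n ≥ 1} Gₙ⁽ᵈ⁾`. -/
def Gset (d : ℕ) : Set (Pt d) := F0 d ∩ ⋂ n, ⋂ (_ : 1 ≤ n), Gn d n

/-- The discrete `p`-energy `𝓔ₚⁿ(f)` on the level-`n` cubes of `F⁽ᵈ⁾`. -/
def energy (d n : ℕ) (p : ℝ) (f : Set (Pt d) → ℝ) : ℝ :=
  (1 / 2) * ∑' Q : QcolOf d n (Fset d), ∑' Q' : QcolOf d n (Fset d),
    if ((Q : Set (Pt d)) ∩ (Q' : Set (Pt d))).Nonempty then |f Q - f Q'| ^ p else 0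

/-- `Sᵐ(A)`: level-`(n+m)` cubes of `F⁽ᵈ⁾` contained in some cube of `A`. -/
def Sm (d n m : ℕ) (A : Set (Set (Pt d))) : Set (Set (Pt d)) :=
  {Q | Q ∈ QcolOf d (n + m) (Fset d) ∧ ∃ Q' ∈ A, Q ⊆ Q'}

/-- The effective `p`-conductance `𝓔_{p,m}(A₁, A₂)`. -/
def conduct (d n m : ℕ) (p : ℝ) (A₁ A₂ : Set (Set (Pt d))) : ℝ :=
  sInf {e : ℝ | ∃ f : Set (Pt d) → ℝ,
    (∀ Q ∈ Sm d n m A₁, f Q = 1) ∧ (∀ Q ∈ Sm d n m A₂, f Q = 0) ∧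
    e = energy d (n + m) p f}

/-- `Γ(Q)`: level-`n` cubes of `F⁽ᵈ⁾` meeting `Q`. -/
def Gam (d n : ℕ) (Q : Set (Pt d)) : Set (Set (Pt d)) :=
  {Q' | Q' ∈ QcolOf d n (Fset d) ∧ (Q' ∩ Q).Nonempty}

/-- `Γ(Q)ᶜ = 𝒬ₙ⁽ᵈ⁾(F⁽ᵈ⁾) \ Γ(Q)`. -/
def GamC (d n : ℕ) (Q : Set (Pt d)) : Set (Set (Pt d)) :=
  QcolOf d n (Fset d) \ Gam d n Q

/-- The corner cube `[0, 1/5]^d`. -/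
def Qone (d : ℕ) : Set (Pt d) := {x | ∀ i, x i ∈ Icc (0 : ℝ) (1/5)}

/-- The center cube `[2/5, 3/5]^d`. -/
def Qtwo (d : ℕ) : Set (Pt d) := {x | ∀ i, x i ∈ Icc (2/5 : ℝ) (3/5)}

end


-- ===================== auxiliary lemmas =====================

section Aux

open Finset in
/-- base-5 expansions with digits 0/4 -/
noncomputable def tD (e : ℕ → ℕ) (K : ℕ) : ℝ := ∑ j ∈ Finset.range K, (e j : ℝ) / 5 ^ (j + 1)

lemma tD_zero (e : ℕ → ℕ) : tD e 0 = 0 := by simp [tD]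

lemma tD_succ (e : ℕ → ℕ) (K : ℕ) :
    tD e (K + 1) = (e 0 : ℝ) / 5 + tD (fun i => e (i + 1)) K / 5 := by
  rw [tD, Finset.sum_range_succ' (fun j => (e j : ℝ) / 5 ^ (j + 1)) K]
  have h : ∑ j ∈ Finset.range K, ((e (j + 1) : ℝ)) / 5 ^ (j + 1 + 1)
      = tD (fun i => e (i + 1)) K / 5 := by
    rw [tD, Finset.sum_div]
    refine Finset.sum_congr rfl fun j _ => ?_
    rw [div_div, ← pow_succ]
  rw [h]
  rw [pow_one, add_comm]

lemma tD_nonneg (e : ℕ → ℕ) (K : ℕ) : 0 ≤ tD e K := by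
  apply Finset.sum_nonneg
  intro j _
  positivity

lemma tD_le_one (e : ℕ → ℕ) (he : ∀ i, e i ≤ 4) (K : ℕ) : tD e K ≤ 1 := by
  induction K generalizing e with
  | zero => simp [tD]
  | succ K ih =>
    rw [tD_succ]
    have h0 : (e 0 : ℝ) ≤ 4 := by exact_mod_cast he 0
    have h1 : tD (fun i => e (i + 1)) K ≤ 1 := ih _ (fun i => he (i + 1))
    linarith

lemma tD_low_high (e : ℕ → ℕ) (he : ∀ i, e i = 0 ∨ e i = 4) (K : ℕ) :
    tD e K ≤ 1 / 5 ∨ 4 / 5 ≤ tD e K := by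
  have he4 : ∀ i, e i ≤ 4 := fun i => by rcases he i with h | h <;> omega
  cases K with
  | zero => left; simp [tD]
  | succ K =>
    rw [tD_succ]
    have h1 : tD (fun i => e (i + 1)) K ≤ 1 := tD_le_one _ (fun i => he4 (i + 1)) K
    have h0 : 0 ≤ tD (fun i => e (i + 1)) K := tD_nonneg _ _
    rcases he 0 with h | h
    · left; rw [h]; push_cast; linarith
    · right; rw [h]; push_cast; linarith

/-- convenient constructor of points of the plane -/
def p2 (a b : ℝ) : Pt 2 := WithLp.toLp 2 ![a, b]

@[simp] lemma p2_zero (a b : ℝ) : p2 a b 0 = a := rfl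
@[simp] lemma p2_one (a b : ℝ) : p2 a b 1 = b := rfl

lemma cube_mem_iff {n : ℕ} {l : Fin 2 → ℕ} {x : Pt 2} :
    x ∈ cube 2 n l ↔ ∀ i, ((l i : ℝ) - 1) / 5 ^ n ≤ x i ∧ x i ≤ (l i : ℝ) / 5 ^ n :=
  Iff.rfl

lemma corner_mem_cube {n : ℕ} (l : Fin 2 → ℕ) :
    p2 ((l 0 : ℝ) / 5 ^ n) ((l 1 : ℝ) / 5 ^ n) ∈ cube 2 n l := by
  intro i
  have h5 : (0:ℝ) < 5 ^ n := by positivity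
  have hx : (p2 ((l 0 : ℝ) / 5 ^ n) ((l 1 : ℝ) / 5 ^ n)) i = (l i : ℝ) / 5 ^ n := by
    fin_cases i <;> rfl
  rw [hx]
  refine ⟨?_, le_rfl⟩
  gcongr
  linarith

lemma cube_injective {n : ℕ} {l l' : Fin 2 → ℕ} (h : cube 2 n l = cube 2 n l') :
    l = l' := by
  have h5 : (0:ℝ) < 5 ^ n := by positivity
  have key : ∀ (a b : Fin 2 → ℕ), cube 2 n a = cube 2 n b → ∀ i, a i ≤ b i := by
    intro a b hab i
    have hmem : p2 ((a 0 : ℝ) / 5 ^ n) ((a 1 : ℝ) / 5 ^ n) ∈ cube 2 n b := by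
      rw [← hab]; exact corner_mem_cube a
    have := (hmem i).2
    have hx : (p2 ((a 0 : ℝ) / 5 ^ n) ((a 1 : ℝ) / 5 ^ n)) i = (a i : ℝ) / 5 ^ n := by
      fin_cases i <;> rfl
    rw [hx] at this
    have : (a i : ℝ) ≤ b i := by
      have := (div_le_div_iff₀ h5 h5).mp this
      nlinarith [pow_pos (show (0:ℝ) < 5 by norm_num) n]
    exact_mod_cast this
  funext i
  exact le_antisymm (key l l' h i) (key l' l h.symm i)


/-- open box inside a cube -/
def obox (n : ℕ) (l : Fin 2 → ℕ) : Set (Pt 2) :=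
  {x | ∀ i, ((l i : ℝ) - 1) / 5 ^ n < x i ∧ x i < (l i : ℝ) / 5 ^ n}

lemma obox_open (n : ℕ) (l : Fin 2 → ℕ) : IsOpen (obox n l) := by
  have h : obox n l = ⋂ i : Fin 2,
      (EuclideanSpace.proj i) ⁻¹' (Set.Ioo (((l i : ℝ) - 1) / 5 ^ n) ((l i : ℝ) / 5 ^ n)) := by
    ext x
    simp only [obox, Set.mem_setOf_eq, Set.mem_iInter, Set.mem_preimage, Set.mem_Ioo]
    rfl
  rw [h]
  exact isOpen_iInter_of_finite fun i =>
    isOpen_Ioo.preimage (EuclideanSpace.proj i).continuous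

lemma obox_subset_cube (n : ℕ) (l : Fin 2 → ℕ) : obox n l ⊆ cube 2 n l :=
  fun x h i => ⟨(h i).1.le, (h i).2.le⟩

lemma mem_interior_cube {n : ℕ} {l : Fin 2 → ℕ} {x : Pt 2} (hx : x ∈ obox n l) :
    x ∈ interior (cube 2 n l) :=
  interior_maximal (obox_subset_cube n l) (obox_open n l) hx

lemma line_mem_Fn : ∀ (n : ℕ) (e : ℕ → ℕ) (K : ℕ) (x : ℝ),
    (∀ i, e i = 0 ∨ e i = 4) → 0 ≤ x → x ≤ 1 → p2 x (tD e K) ∈ Fn 2 n := by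
  intro n
  induction n using Nat.twoStepInduction with
  | zero =>
    intro e K x he hx0 hx1
    have he4 : ∀ i, e i ≤ 4 := fun i => by rcases he i with h | h <;> omega
    intro i
    fin_cases i <;> simp only [p2_zero, p2_one, Set.mem_Icc]
    · exact ⟨hx0, hx1⟩
    · exact ⟨tD_nonneg e K, tD_le_one e he4 K⟩
  | one =>
    intro e K x he hx0 hx1
    have he4 : ∀ i, e i ≤ 4 := fun i => by rcases he i with h | h <;> omega
    have hlh := tD_low_high e he K
    constructor
    · intro i
      fin_cases i <;> simp only [p2_zero, p2_one, Set.mem_Icc]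
      · exact ⟨hx0, hx1⟩
      · exact ⟨tD_nonneg e K, tD_le_one e he4 K⟩
    · intro hmem
      rw [Set.mem_iUnion] at hmem
      obtain ⟨i, hi⟩ := hmem
      simp only [Set.mem_setOf_eq] at hi
      fin_cases i
      · have h1 : tD e K ∈ Set.Ioo (2/5:ℝ) (3/5) := hi.2.2 1 (by decide)
        simp only [Set.mem_Ioo] at h1
        rcases hlh with h | h <;> linarith [h1.1, h1.2]
      · have h1 : tD e K ∈ Set.Ioo (1/5:ℝ) (2/5) ∪ Set.Ioo (3/5:ℝ) (4/5) := hi.2.1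
        rcases h1 with h1 | h1 <;> rcases hlh with h | h <;>
          simp only [Set.mem_Ioo] at h1 <;> linarith [h1.1, h1.2]
  | more n ihn ih =>
    intro e K x he hx0 hx1
    -- split off the leading digit
    obtain ⟨r0, e', K', hr0, he', ht⟩ :
        ∃ (r0 : ℕ) (e' : ℕ → ℕ) (K' : ℕ), (r0 = 0 ∨ r0 = 4) ∧ (∀ i, e' i = 0 ∨ e' i = 4) ∧
          tD e K = (r0 : ℝ) / 5 + tD e' K' / 5 := by
      cases K with
      | zero =>
        exact ⟨0, fun _ => 0, 0, Or.inl rfl, fun _ => Or.inl rfl, by simp [tD_zero]⟩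
      | succ K =>
        exact ⟨e 0, fun i => e (i + 1), K, he 0, fun i => he (i + 1), tD_succ e K⟩
    -- choose the column
    set c := ⌈(5 * x : ℝ)⌉₊ with hc
    set k := max 1 c with hk
    have hk1 : 1 ≤ k := le_max_left _ _
    have hck : c ≤ 5 := Nat.ceil_le.2 (by push_cast; linarith)
    have hk5 : k ≤ 5 := max_le (by norm_num) hck
    have hxk2 : 5 * x ≤ (k : ℝ) := by
      refine le_trans (Nat.le_ceil _) ?_
      exact_mod_cast Nat.cast_le.2 (le_max_right 1 c)
    have hxk1 : (k : ℝ) - 1 ≤ 5 * x := by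
      rcases Nat.eq_zero_or_pos c with h0 | hpos
      · have hk1' : k = 1 := by omega
        rw [hk1']; push_cast; linarith
      · have hkc : k = c := by omega
        rw [hkc, hc]
        have := Nat.ceil_lt_add_one (show (0:ℝ) ≤ 5 * x by linarith)
        linarith
    -- the level-1 cube we land in
    set l : Fin 2 → ℕ := ![k, r0 + 1] with hldef
    have hl0 : l 0 = k := rfl
    have hl1 : l 1 = r0 + 1 := rfl
    have hk1R : (1:ℝ) ≤ (k:ℝ) := by exact_mod_cast hk1
    have hk5R : (k:ℝ) ≤ 5 := by exact_mod_cast hk5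
    have hstar : cube 2 1 l ∈ QcolOf 2 1 (F1 2) := by
      constructor
      · refine ⟨l, ?_, rfl⟩
        intro i
        fin_cases i
        · refine ⟨hk1, ?_⟩
          show k ≤ 5 ^ 1
          simpa using hk5
        · refine ⟨Nat.le_add_left 1 r0, ?_⟩
          show r0 + 1 ≤ 5 ^ 1
          rcases hr0 with h | h <;> simp [h]
      · refine ⟨p2 ((2 * (k:ℝ) - 1) / 10) ((2 * (r0:ℝ) + 1) / 10), ?_, ?_, ?_⟩
        · apply mem_interior_cube
          intro i
          fin_cases i
          · show ((k:ℝ) - 1) / 5 ^ 1 < (2 * (k:ℝ) - 1) / 10 ∧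
              (2 * (k:ℝ) - 1) / 10 < (k:ℝ) / 5 ^ 1
            rw [pow_one]
            constructor <;> linarith
          · show (((r0 + 1 : ℕ) : ℝ) - 1) / 5 ^ 1 < (2 * (r0:ℝ) + 1) / 10 ∧
              (2 * (r0:ℝ) + 1) / 10 < ((r0 + 1 : ℕ) : ℝ) / 5 ^ 1
            rw [pow_one]
            push_cast
            constructor <;> linarith
        · intro i
          fin_cases i
          · show (2 * (k:ℝ) - 1) / 10 ∈ Set.Icc (0:ℝ) 1
            rw [Set.mem_Icc]
            constructor <;> linarith
          · show (2 * (r0:ℝ) + 1) / 10 ∈ Set.Icc (0:ℝ) 1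
            rw [Set.mem_Icc]
            rcases hr0 with h | h <;> rw [h] <;> norm_num
        · intro hmem
          rw [Set.mem_iUnion] at hmem
          obtain ⟨i, hi⟩ := hmem
          simp only [Set.mem_setOf_eq] at hi
          fin_cases i
          · have h1 : (2 * (r0:ℝ) + 1) / 10 ∈ Set.Ioo (2/5:ℝ) (3/5) := hi.2.2 1 (by decide)
            rw [Set.mem_Ioo] at h1
            rcases hr0 with h | h <;> rw [h] at h1 <;> norm_num at h1
          · have h1 : (2 * (r0:ℝ) + 1) / 10 ∈ Set.Ioo (1/5:ℝ) (2/5) ∪ Set.Ioo (3/5:ℝ) (4/5) :=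
              hi.2.1
            rcases h1 with h1 | h1 <;> rw [Set.mem_Ioo] at h1 <;>
              rcases hr0 with h | h <;> rw [h] at h1 <;> norm_num at h1
    show p2 x (tD e K) ∈ Fn 2 (n + 2)
    have hFn : Fn 2 (n + 2) =
        ⋃ l ∈ {l : Fin 2 → ℕ | cube 2 1 l ∈ QcolOf 2 1 (F1 2)}, psi 2 1 l '' Fn 2 (n + 1) :=
      rfl
    rw [hFn]
    refine Set.mem_biUnion hstar ⟨p2 (5 * x - ((k:ℝ) - 1)) (tD e' K'), ?_, ?_⟩
    · exact ih e' K' _ he' (by linarith) (by linarith)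
    · refine congrArg (WithLp.toLp 2) (funext fun i => ?_)
      fin_cases i
      · show ((k:ℝ) - 1) / 5 ^ 1 + (5 * x - ((k:ℝ) - 1)) / 5 ^ 1 = x
        rw [pow_one]; ring
      · show (((r0 + 1 : ℕ) : ℝ) - 1) / 5 ^ 1 + tD e' K' / 5 ^ 1 = tD e K
        rw [pow_one, ht]; push_cast; ring


lemma mem_Fset (e : ℕ → ℕ) (K : ℕ) (x : ℝ) (he : ∀ i, e i = 0 ∨ e i = 4)
    (hx0 : 0 ≤ x) (hx1 : x ≤ 1) : p2 x (tD e K) ∈ Fset 2 :=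
  Set.mem_iInter.2 fun n => line_mem_Fn n e K x he hx0 hx1

/-- digit functions for rows -/
def dgt (m : ℕ) (v : Fin m → Bool) (i : ℕ) : ℕ :=
  if h : i < m then (if v ⟨i, h⟩ then 4 else 0) else 0

lemma dgt_le (m : ℕ) (v : Fin m → Bool) (i : ℕ) : dgt m v i ≤ 4 := by
  unfold dgt; split <;> [split; skip] <;> omega

/-- index (1-based) of a full row -/
def rowIdx (m : ℕ) (v : Fin m → Bool) : ℕ :=
  1 + ∑ i ∈ Finset.range m, dgt m v i * 5 ^ i

lemma sum_digits_le (m : ℕ) (d : ℕ → ℕ) (hd : ∀ i, d i ≤ 4) :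
    ∑ i ∈ Finset.range m, d i * 5 ^ i ≤ 5 ^ m - 1 := by
  induction m with
  | zero => simp
  | succ m ih =>
    rw [Finset.sum_range_succ]
    have h1 : (1:ℕ) ≤ 5 ^ m := Nat.one_le_pow _ _ (by norm_num)
    have h2 : (5:ℕ) ^ (m + 1) = 5 * 5 ^ m := by rw [pow_succ]; ring
    have h3 := hd m
    have h4 : d m * 5 ^ m ≤ 4 * 5 ^ m := Nat.mul_le_mul_right _ h3
    omega

lemma rowIdx_le (m : ℕ) (v : Fin m → Bool) : rowIdx m v ≤ 5 ^ m := by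
  have := sum_digits_le m (dgt m v) (dgt_le m v)
  have h1 : (1:ℕ) ≤ 5 ^ m := Nat.one_le_pow _ _ (by norm_num)
  unfold rowIdx; omega

lemma digits_sum_inj : ∀ (m : ℕ) (d d' : ℕ → ℕ), (∀ i, d i ≤ 4) → (∀ i, d' i ≤ 4) →
    (∑ i ∈ Finset.range m, d i * 5 ^ i) = (∑ i ∈ Finset.range m, d' i * 5 ^ i) →
    ∀ i, i < m → d i = d' i := by
  intro m
  induction m with
  | zero => intro d d' _ _ _ i hi; omega
  | succ m ih =>
    intro d d' hd hd' hsum i hi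
    have hshift : ∀ (c : ℕ → ℕ), ∑ j ∈ Finset.range (m+1), c j * 5 ^ j
        = c 0 + 5 * ∑ j ∈ Finset.range m, c (j+1) * 5 ^ j := by
      intro c
      rw [Finset.sum_range_succ' (fun j => c j * 5 ^ j) m, Finset.mul_sum]
      have : ∀ j, c (j+1) * 5 ^ (j+1) = 5 * (c (j+1) * 5 ^ j) := by
        intro j; rw [pow_succ]; ring
      rw [Finset.sum_congr rfl fun j _ => this j]
      omega
    rw [hshift d, hshift d'] at hsum
    have h0 : d 0 = d' 0 ∧ (∑ j ∈ Finset.range m, d (j+1) * 5 ^ j)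
        = ∑ j ∈ Finset.range m, d' (j+1) * 5 ^ j := by
      have := hd 0; have := hd' 0; omega
    rcases i with _ | i
    · exact h0.1
    · exact ih (fun j => d (j+1)) (fun j => d' (j+1)) (fun j => hd (j+1)) (fun j => hd' (j+1))
        h0.2 i (by omega)

lemma rowIdx_inj (m : ℕ) {v v' : Fin m → Bool} (h : rowIdx m v = rowIdx m v') : v = v' := by
  have hs : (∑ i ∈ Finset.range m, dgt m v i * 5 ^ i)
      = ∑ i ∈ Finset.range m, dgt m v' i * 5 ^ i := by
    unfold rowIdx at h; omega
  have := digits_sum_inj m (dgt m v) (dgt m v') (dgt_le m v) (dgt_le m v') hs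
  funext i
  have h2 := this i i.2
  unfold dgt at h2
  rw [dif_pos i.2, dif_pos i.2] at h2
  rcases hv : v ⟨i, i.2⟩ <;> rcases hv' : v' ⟨i, i.2⟩ <;>
    rw [hv, hv'] at h2 <;> simp_all

/-- the digit expansion of the interior height of a full row -/
def eRow (m : ℕ) (v : Fin m → Bool) (j : ℕ) : ℕ :=
  if j = m + 1 then 4 else if 1 ≤ j ∧ j ≤ m then dgt m v (m - j) else 0

lemma eRow_digits (m : ℕ) (v : Fin m → Bool) (j : ℕ) : eRow m v j = 0 ∨ eRow m v j = 4 := by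
  unfold eRow dgt
  split
  · right; rfl
  · split
    · split
      · split <;> omega
      · left; rfl
    · left; rfl

lemma ystar_eq (m : ℕ) (v : Fin m → Bool) :
    tD (eRow m v) (m + 2) = ((rowIdx m v : ℝ) - 1) / 5 ^ (m + 1) + 4 / 5 ^ (m + 2) := by
  have hcast : ((rowIdx m v : ℝ) - 1)
      = ∑ i ∈ Finset.range m, (dgt m v i : ℝ) * 5 ^ i := by
    unfold rowIdx
    push_cast
    ring
  rw [hcast]
  rw [tD, Finset.sum_range_succ]
  have hlast : eRow m v (m + 1) = 4 := if_pos rfl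
  rw [hlast]
  have hsplit := Finset.sum_range_succ' (fun j => (eRow m v j : ℝ) / 5 ^ (j + 1)) m
  rw [hsplit]
  have h0 : eRow m v 0 = 0 := by unfold eRow; simp
  rw [h0]
  have hmid : ∀ j ∈ Finset.range m, ((eRow m v (j+1) : ℝ)) / 5 ^ (j + 1 + 1)
      = (fun i => (dgt m v i : ℝ) * 5 ^ i / 5 ^ (m + 1)) (m - 1 - j) := by
    intro j hj
    rw [Finset.mem_range] at hj
    have he : eRow m v (j + 1) = dgt m v (m - 1 - j) := by
      unfold eRow
      rw [if_neg (by omega), if_pos (by omega)]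
      congr 1
      omega
    rw [he]
    have hpow : (5:ℝ) ^ (m - 1 - j) * 5 ^ (j + 1 + 1) = 5 ^ (m + 1) := by
      rw [← pow_add]; congr 1; omega
    show (dgt m v (m - 1 - j) : ℝ) / 5 ^ (j + 1 + 1)
        = (dgt m v (m - 1 - j) : ℝ) * 5 ^ (m - 1 - j) / 5 ^ (m + 1)
    rw [div_eq_div_iff (by positivity) (by positivity), mul_assoc, hpow]
  rw [Finset.sum_congr rfl hmid]
  rw [Finset.sum_range_reflect (fun i => (dgt m v i : ℝ) * 5 ^ i / 5 ^ (m + 1)) m]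
  rw [← Finset.sum_div]
  push_cast
  ring

lemma ystar_mem_Fset (m : ℕ) (v : Fin m → Bool) (x : ℝ) (hx0 : 0 ≤ x) (hx1 : x ≤ 1) :
    p2 x (tD (eRow m v) (m + 2)) ∈ Fset 2 :=
  mem_Fset _ _ _ (eRow_digits m v) hx0 hx1

/-- the chain cubes: column j (1-based), full row `rowIdx m v`, at level m+1 -/
lemma chain_cube_mem (m : ℕ) (v : Fin m → Bool) (j : ℕ) (hj1 : 1 ≤ j)
    (hj2 : j ≤ 5 ^ (m + 1)) :
    cube 2 (m + 1) ![j, rowIdx m v] ∈ QcolOf 2 (m + 1) (Fset 2) := by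
  have hT : (0:ℝ) < 5 ^ (m + 1) := by positivity
  have hT2 : (0:ℝ) < 5 ^ (m + 2) := by positivity
  have hr1 : 1 ≤ rowIdx m v := Nat.le_add_right 1 _
  have hr5 : rowIdx m v ≤ 5 ^ m := rowIdx_le m v
  have hrm : rowIdx m v ≤ 5 ^ (m + 1) := le_trans hr5 (Nat.pow_le_pow_right (by norm_num) (by omega))
  constructor
  · refine ⟨![j, rowIdx m v], ?_, rfl⟩
    intro i
    fin_cases i
    · exact ⟨hj1, hj2⟩
    · exact ⟨hr1, hrm⟩
  · refine ⟨p2 ((2 * (j:ℝ) - 1) / (2 * 5 ^ (m + 1))) (tD (eRow m v) (m + 2)), ?_, ?_⟩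
    · apply mem_interior_cube
      have hy := ystar_eq m v
      have hjR : (1:ℝ) ≤ (j:ℝ) := by exact_mod_cast hj1
      have hrR : (1:ℝ) ≤ (rowIdx m v : ℝ) := by exact_mod_cast hr1
      have hpow : (5:ℝ) ^ (m + 2) = 5 ^ (m + 1) * 5 := by rw [pow_succ]
      intro i
      fin_cases i
      · show ((j:ℝ) - 1) / 5 ^ (m + 1) < (2 * (j:ℝ) - 1) / (2 * 5 ^ (m + 1)) ∧
          (2 * (j:ℝ) - 1) / (2 * 5 ^ (m + 1)) < (j:ℝ) / 5 ^ (m + 1)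
        constructor
        · rw [div_lt_div_iff₀ hT (by positivity)]
          nlinarith
        · rw [div_lt_div_iff₀ (by positivity) hT]
          nlinarith
      · show ((rowIdx m v : ℝ) - 1) / 5 ^ (m + 1) < tD (eRow m v) (m + 2) ∧
          tD (eRow m v) (m + 2) < (rowIdx m v : ℝ) / 5 ^ (m + 1)
        rw [hy]
        constructor
        · have : (0:ℝ) < 4 / 5 ^ (m + 2) := by positivity
          linarith
        · have h45 : (4:ℝ) / 5 ^ (m + 2) < 5 / 5 ^ (m + 2) := by
            rw [div_lt_div_iff₀ hT2 hT2]
            nlinarith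
          have h55 : (5:ℝ) / 5 ^ (m + 2) = 1 / 5 ^ (m + 1) := by
            rw [hpow]; field_simp
          have : ((rowIdx m v : ℝ) - 1) / 5 ^ (m + 1) + 1 / 5 ^ (m + 1)
              = (rowIdx m v : ℝ) / 5 ^ (m + 1) := by ring
          linarith
    · apply ystar_mem_Fset
      · have hjR : (1:ℝ) ≤ (j:ℝ) := by exact_mod_cast hj1
        apply div_nonneg
        · linarith
        · positivity
      · rw [div_le_one (by positivity)]
        have : (j:ℝ) ≤ 5 ^ (m + 1) := by exact_mod_cast hj2
        linarith


lemma Qcol_finite (d n : ℕ) : (Qcol d n).Finite := by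
  have hfin : ({l : Fin d → ℕ | ∀ i, l i ∈ Set.Icc 1 (5 ^ n)}).Finite := by
    apply (Set.Finite.pi (fun i : Fin d => Set.finite_Icc 1 (5 ^ n))).subset
    intro l hl
    exact fun i _ => hl i
  apply (hfin.image (cube d n)).subset
  rintro Q ⟨l, hl, rfl⟩
  exact ⟨l, fun i => ⟨(hl i).1, (hl i).2⟩, rfl⟩

lemma QcolOf_finite (d n : ℕ) (A : Set (Pt d)) : (QcolOf d n A).Finite :=
  (Qcol_finite d n).subset fun _ hQ => hQ.1

lemma pow_succ_5 (m : ℕ) : (5:ℝ) ^ m / 5 ^ (m + 1) = 1 / 5 := by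
  rw [pow_succ]
  have : (5:ℝ) ^ m ≠ 0 := by positivity
  field_simp

/-- cubes with both indices at most `5^m` lie in `Qone` -/
lemma cube_sub_Qone (m : ℕ) (l : Fin 2 → ℕ) (h1 : ∀ i, 1 ≤ l i) (h2 : ∀ i, l i ≤ 5 ^ m) :
    cube 2 (m + 1) l ⊆ Qone 2 := by
  intro z hz i
  have hT : (0:ℝ) < 5 ^ (m + 1) := by positivity
  have hl1 : (1:ℝ) ≤ (l i : ℝ) := by exact_mod_cast h1 i
  have hl2 : (l i : ℝ) ≤ 5 ^ m := by exact_mod_cast h2 i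
  have hzi := hz i
  constructor
  · have : (0:ℝ) ≤ ((l i : ℝ) - 1) / 5 ^ (m + 1) := by
      apply div_nonneg (by linarith) hT.le
    linarith [hzi.1]
  · have h3 : (l i : ℝ) / 5 ^ (m + 1) ≤ 5 ^ m / 5 ^ (m + 1) := by gcongr
    rw [pow_succ_5 m] at h3
    linarith [hzi.2]

lemma mem_Sm_Qone (m : ℕ) (v : Fin m → Bool) (j : ℕ) (hj1 : 1 ≤ j) (hj5 : j ≤ 5 ^ m) :
    cube 2 (m + 1) ![j, rowIdx m v] ∈ Sm 2 1 m {Qone 2} := by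
  constructor
  · rw [Nat.add_comm 1 m]
    refine chain_cube_mem m v j hj1 (le_trans hj5 ?_)
    exact Nat.pow_le_pow_right (by norm_num) (by omega)
  · refine ⟨Qone 2, Set.mem_singleton _, ?_⟩
    apply cube_sub_Qone m
    · intro i; fin_cases i
      · exact hj1
      · exact Nat.le_add_right 1 _
    · intro i; fin_cases i
      · exact hj5
      · exact rowIdx_le m v

/-- the cube `[2/5,3/5] × [0,1/5]` belongs to the level-1 cubes of the fractal -/
lemma cube31_mem : cube 2 1 ![3, 1] ∈ QcolOf 2 1 (Fset 2) := by
  have hval : tD (fun j => if j = 1 then 4 else 0) 2 = 4 / 25 := by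
    rw [tD]
    rw [Finset.sum_range_succ, Finset.sum_range_succ, Finset.sum_range_zero]
    norm_num
  constructor
  · refine ⟨![3, 1], ?_, rfl⟩
    intro i; fin_cases i <;> simp
  · refine ⟨p2 (1/2) (tD (fun j => if j = 1 then 4 else 0) 2), ?_, ?_⟩
    · apply mem_interior_cube
      intro i
      fin_cases i
      · show (((3:ℕ):ℝ) - 1) / 5 ^ 1 < 1/2 ∧ (1/2:ℝ) < ((3:ℕ):ℝ) / 5 ^ 1
        norm_num
      · show (((1:ℕ):ℝ) - 1) / 5 ^ 1 < tD (fun j => if j = 1 then 4 else 0) 2 ∧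
          tD (fun j => if j = 1 then 4 else 0) 2 < ((1:ℕ):ℝ) / 5 ^ 1
        rw [hval]
        norm_num
    · apply mem_Fset
      · intro i
        by_cases h : i = 1 <;> simp [h]
      · norm_num
      · norm_num

lemma cube31_disjoint : ¬ (cube 2 1 ![3, 1] ∩ Qone 2).Nonempty := by
  rintro ⟨z, hz1, hz2⟩
  have h1 : (((3:ℕ):ℝ) - 1) / 5 ^ 1 ≤ z 0 := (hz1 0).1
  have h2 : z 0 ≤ 1/5 := (hz2 0).2
  norm_num at h1
  linarith

lemma mem_Sm_GamC (m : ℕ) (v : Fin m → Bool) :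
    cube 2 (m + 1) ![2 * 5 ^ m + 1, rowIdx m v] ∈ Sm 2 1 m (GamC 2 1 (Qone 2)) := by
  have h5m : 1 ≤ 5 ^ m := Nat.one_le_pow _ _ (by norm_num)
  have hT : (0:ℝ) < 5 ^ (m + 1) := by positivity
  constructor
  · rw [Nat.add_comm 1 m]
    refine chain_cube_mem m v _ (by omega) (by rw [pow_succ]; omega)
  · refine ⟨cube 2 1 ![3, 1], ⟨cube31_mem, ?_⟩, ?_⟩
    · intro hmem
      exact cube31_disjoint hmem.2
    · -- cube ⊆ cube31
      intro z hz i
      have hr1 : 1 ≤ rowIdx m v := Nat.le_add_right 1 _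
      have hr5 : rowIdx m v ≤ 5 ^ m := rowIdx_le m v
      have hrR : (rowIdx m v : ℝ) ≤ 5 ^ m := by exact_mod_cast hr5
      have hrR1 : (1:ℝ) ≤ (rowIdx m v : ℝ) := by exact_mod_cast hr1
      have hpow : (5:ℝ) ^ (m + 1) = 5 ^ m * 5 := by rw [pow_succ]
      have h5mR : (1:ℝ) ≤ (5:ℝ) ^ m := by exact_mod_cast h5m
      fin_cases i
      · have hz0 := hz 0
        have hlow : ((2 * 5 ^ m + 1 : ℕ) : ℝ) - 1 = 2 * 5 ^ m := by push_cast; ring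
        constructor
        · show (((3:ℕ):ℝ) - 1) / 5 ^ 1 ≤ z 0
          have heq : (((2 * 5 ^ m + 1 : ℕ) : ℝ) - 1) / 5 ^ (m + 1) = 2 / 5 := by
            rw [hlow, hpow]
            field_simp
          have hh : (((2 * 5 ^ m + 1 : ℕ) : ℝ) - 1) / 5 ^ (m + 1) ≤ z 0 := hz0.1
          rw [heq] at hh
          norm_num
          linarith
        · show z 0 ≤ ((3:ℕ):ℝ) / 5 ^ 1
          have hle : ((2 * 5 ^ m + 1 : ℕ) : ℝ) / 5 ^ (m + 1) ≤ 3 / 5 := by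
            rw [div_le_div_iff₀ hT (by norm_num)]
            push_cast
            rw [hpow]
            nlinarith
          have hh : z 0 ≤ ((2 * 5 ^ m + 1 : ℕ) : ℝ) / 5 ^ (m + 1) := hz0.2
          norm_num
          linarith
      · have hz1 := hz 1
        constructor
        · show (((1:ℕ):ℝ) - 1) / 5 ^ 1 ≤ z 1
          have hnn : (0:ℝ) ≤ ((rowIdx m v : ℝ) - 1) / 5 ^ (m + 1) :=
            div_nonneg (by linarith) hT.le
          have hh : ((rowIdx m v : ℝ) - 1) / 5 ^ (m + 1) ≤ z 1 := hz1.1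
          norm_num
          linarith
        · show z 1 ≤ ((1:ℕ):ℝ) / 5 ^ 1
          have hle : (rowIdx m v : ℝ) / 5 ^ (m + 1) ≤ 1 / 5 := by
            rw [div_le_div_iff₀ hT (by norm_num), hpow]
            nlinarith
          have hh : z 1 ≤ (rowIdx m v : ℝ) / 5 ^ (m + 1) := hz1.2
          norm_num
          linarith

lemma chain_adj (m r j : ℕ) :
    (cube 2 (m + 1) ![j, r] ∩ cube 2 (m + 1) ![j + 1, r]).Nonempty := by
  have hdiv : ∀ (a b : ℝ), a ≤ b → a / 5 ^ (m + 1) ≤ b / 5 ^ (m + 1) := by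
    intro a b h
    gcongr
  refine ⟨p2 ((j:ℝ) / 5 ^ (m + 1)) ((r:ℝ) / 5 ^ (m + 1)), ?_, ?_⟩ <;> intro i <;> fin_cases i
  · exact ⟨hdiv ((j:ℝ) - 1) (j:ℝ) (by linarith), le_rfl⟩
  · exact ⟨hdiv ((r:ℝ) - 1) (r:ℝ) (by linarith), le_rfl⟩
  · constructor
    · show (((j + 1 : ℕ) : ℝ) - 1) / 5 ^ (m + 1) ≤ (j:ℝ) / 5 ^ (m + 1)
      apply le_of_eq
      push_cast
      ring
    · show (j:ℝ) / 5 ^ (m + 1) ≤ ((j + 1 : ℕ) : ℝ) / 5 ^ (m + 1)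
      apply hdiv
      push_cast
      linarith
  · exact ⟨hdiv ((r:ℝ) - 1) (r:ℝ) (by linarith), le_rfl⟩

lemma chain_holder (N : ℕ) (hN : 1 ≤ N) {p : ℝ} (hp : 1 < p) (a : ℕ → ℝ)
    (h0 : a 0 = 1) (hN0 : a N = 0) :
    ((N:ℝ)) ^ (1 - p) ≤ ∑ k ∈ Finset.range N, |a (k + 1) - a k| ^ p := by
  have h1 : (1:ℝ) ≤ ∑ k ∈ Finset.range N, |a (k + 1) - a k| := by
    have htel : ∑ k ∈ Finset.range N, (a (k + 1) - a k) = a N - a 0 :=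
      Finset.sum_range_sub a N
    calc (1:ℝ) = |a N - a 0| := by rw [h0, hN0]; norm_num
    _ = |∑ k ∈ Finset.range N, (a (k + 1) - a k)| := by rw [htel]
    _ ≤ ∑ k ∈ Finset.range N, |a (k + 1) - a k| := Finset.abs_sum_le_sum_abs _ _
  have key := Real.rpow_sum_le_const_mul_sum_rpow (Finset.range N)
    (fun k => a (k + 1) - a k) hp.le
  have hNpos : (0:ℝ) < N := by exact_mod_cast hN
  have h2 : (1:ℝ) ≤ (∑ k ∈ Finset.range N, |a (k + 1) - a k|) ^ p := by
    calc (1:ℝ) = (1:ℝ) ^ p := (Real.one_rpow p).symm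
    _ ≤ _ := Real.rpow_le_rpow (by norm_num) h1 (by linarith)
  rw [Finset.card_range] at key
  have h3 : (1:ℝ) ≤ (N:ℝ) ^ (p - 1) * ∑ k ∈ Finset.range N, |a (k + 1) - a k| ^ p :=
    le_trans h2 key
  have hNp : (0:ℝ) < (N:ℝ) ^ (p - 1) := Real.rpow_pos_of_pos hNpos _
  have hinv : (N:ℝ) ^ (1 - p) = ((N:ℝ) ^ (p - 1))⁻¹ := by
    rw [← Real.rpow_neg hNpos.le]
    congr 1
    ring
  rw [hinv, inv_eq_one_div, div_le_iff₀ hNp, mul_comm]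
  linarith


lemma Qc_inj {m : ℕ} {v v' : Fin m → Bool} {j j' : ℕ}
    (h : cube 2 (m + 1) ![j, rowIdx m v] = cube 2 (m + 1) ![j', rowIdx m v']) :
    j = j' ∧ v = v' := by
  have hl := cube_injective h
  have h0 : j = j' := congrFun hl 0
  have h1 : rowIdx m v = rowIdx m v' := congrFun hl 1
  exact ⟨h0, rowIdx_inj m h1⟩

lemma energy_lower_bound (p : ℝ) (hp : 1 < p) (m : ℕ) (hm : 1 ≤ m) (f : Set (Pt 2) → ℝ)
    (hf1 : ∀ Q ∈ Sm 2 1 m {Qone 2}, f Q = 1)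
    (hf0 : ∀ Q ∈ Sm 2 1 m (GamC 2 1 (Qone 2)), f Q = 0) :
    (2:ℝ) ^ m * ((5:ℝ) ^ m + 1) ^ (1 - p) ≤ energy 2 (1 + m) p f := by
  classical
  have h5m : 1 ≤ 5 ^ m := Nat.one_le_pow _ _ (by norm_num)
  haveI hfin : Fintype ↥(QcolOf 2 (1 + m) (Fset 2)) :=
    (QcolOf_finite 2 (1 + m) (Fset 2)).fintype
  have hmem : ∀ (v : Fin m → Bool) (k : ℕ), k ≤ 5 ^ m + 1 →
      cube 2 (m + 1) ![5 ^ m + k, rowIdx m v] ∈ QcolOf 2 (1 + m) (Fset 2) := by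
    intro v k hk
    rw [Nat.add_comm 1 m]
    exact chain_cube_mem m v _ (by omega) (by rw [pow_succ]; omega)
  set T := QcolOf 2 (1 + m) (Fset 2) with hTdef
  set F : ↥T × ↥T → ℝ := fun z =>
    if ((z.1 : Set (Pt 2)) ∩ (z.2 : Set (Pt 2))).Nonempty then |f z.1 - f z.2| ^ p else 0
    with hFdef
  have hFnn : ∀ z, 0 ≤ F z := by
    intro z
    rw [hFdef]
    dsimp only
    split
    · positivity
    · exact le_rfl
  set ψ : (Fin m → Bool) × Fin (5 ^ m + 1) × Bool → ↥T × ↥T := fun z =>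
    (⟨_, hmem z.1 ((z.2.1 : ℕ) + if z.2.2 then 0 else 1)
        (by have := z.2.1.2; split <;> omega)⟩,
     ⟨_, hmem z.1 ((z.2.1 : ℕ) + if z.2.2 then 1 else 0)
        (by have := z.2.1.2; split <;> omega)⟩) with hψdef
  -- injectivity
  have hinj : ∀ z ∈ Finset.univ, ∀ z' ∈ Finset.univ, ψ z = ψ z' → z = z' := by
    rintro ⟨v, k, b⟩ - ⟨v', k', b'⟩ - heq
    rw [hψdef] at heq
    rw [Prod.ext_iff] at heq
    have e1 : cube 2 (m + 1) ![5 ^ m + ((k:ℕ) + if b then 0 else 1), rowIdx m v]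
        = cube 2 (m + 1) ![5 ^ m + ((k':ℕ) + if b' then 0 else 1), rowIdx m v'] :=
      Subtype.ext_iff.1 heq.1
    have e2 : cube 2 (m + 1) ![5 ^ m + ((k:ℕ) + if b then 1 else 0), rowIdx m v]
        = cube 2 (m + 1) ![5 ^ m + ((k':ℕ) + if b' then 1 else 0), rowIdx m v'] :=
      Subtype.ext_iff.1 heq.2
    obtain ⟨hj1, hv1⟩ := Qc_inj e1
    obtain ⟨hj2, hv2⟩ := Qc_inj e2
    have hkb : (k:ℕ) = (k':ℕ) ∧ b = b' := by
      rcases b <;> rcases b' <;> simp only [if_true, if_false, Bool.false_eq_true,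
        Bool.true_eq_false] at hj1 hj2 <;>
        first
          | exact ⟨by omega, rfl⟩
          | (exfalso; omega)
    obtain ⟨hk, hb⟩ := hkb
    subst hb
    subst hv1
    have hkk : k = k' := Fin.ext hk
    subst hkk
    rfl
  -- the values along a chain
  set a : (Fin m → Bool) → ℕ → ℝ :=
    fun v k => f (cube 2 (m + 1) ![5 ^ m + k, rowIdx m v]) with hadef
  have hFedge : ∀ (v : Fin m → Bool) (k : Fin (5 ^ m + 1)) (b : Bool),
      F (ψ (v, k, b)) = |a v ((k:ℕ) + 1) - a v (k:ℕ)| ^ p := by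
    intro v k b
    have hassoc : 5 ^ m + ((k:ℕ) + 1) = (5 ^ m + (k:ℕ)) + 1 := by omega
    have hadj1 : (cube 2 (m + 1) ![5 ^ m + (k:ℕ), rowIdx m v]
        ∩ cube 2 (m + 1) ![5 ^ m + ((k:ℕ) + 1), rowIdx m v]).Nonempty := by
      rw [hassoc]
      exact chain_adj m (rowIdx m v) (5 ^ m + (k:ℕ))
    have hadj2 : (cube 2 (m + 1) ![5 ^ m + ((k:ℕ) + 1), rowIdx m v]
        ∩ cube 2 (m + 1) ![5 ^ m + (k:ℕ), rowIdx m v]).Nonempty := by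
      rw [Set.inter_comm]
      exact hadj1
    rcases b
    · rw [hψdef, hFdef]
      dsimp only
      norm_num
      rw [if_pos hadj2]
    · rw [hψdef, hFdef]
      dsimp only
      norm_num
      rw [if_pos hadj1, abs_sub_comm]
  -- endpoints
  have ha0 : ∀ v, a v 0 = 1 := by
    intro v
    rw [hadef]
    exact hf1 _ (mem_Sm_Qone m v (5 ^ m + 0) (by omega) (by omega))
  have haN : ∀ v, a v (5 ^ m + 1) = 0 := by
    intro v
    rw [hadef]
    dsimp only
    rw [show 5 ^ m + (5 ^ m + 1) = 2 * 5 ^ m + 1 by ring]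
    exact hf0 _ (mem_Sm_GamC m v)
  -- the main estimate on the full sum
  have hbig : (2:ℝ) ^ m * (((5:ℝ) ^ m + 1) ^ (1 - p)) * 2 ≤ ∑ z : ↥T × ↥T, F z := by
    have himg : ∑ z ∈ Finset.image ψ Finset.univ, F z ≤ ∑ z : ↥T × ↥T, F z :=
      Finset.sum_le_sum_of_subset_of_nonneg (Finset.subset_univ _) fun z _ _ => hFnn z
    have heval : ∑ z ∈ Finset.image ψ Finset.univ, F z
        = ∑ w : (Fin m → Bool) × Fin (5 ^ m + 1) × Bool, F (ψ w) :=
      Finset.sum_image hinj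
    have hsplit : ∑ w : (Fin m → Bool) × Fin (5 ^ m + 1) × Bool, F (ψ w)
        = ∑ v : Fin m → Bool, ∑ k : Fin (5 ^ m + 1), ∑ b : Bool, F (ψ (v, k, b)) := by
      rw [Fintype.sum_prod_type]
      refine Finset.sum_congr rfl fun v _ => ?_
      rw [Fintype.sum_prod_type]
    have hrow : ∀ v : Fin m → Bool,
        ∑ k : Fin (5 ^ m + 1), ∑ b : Bool, F (ψ (v, k, b))
          ≥ 2 * (((5:ℝ) ^ m + 1) ^ (1 - p)) := by
      intro v
      have h1 : ∀ k : Fin (5 ^ m + 1), ∑ b : Bool, F (ψ (v, k, b))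
          = 2 * |a v ((k:ℕ) + 1) - a v (k:ℕ)| ^ p := by
        intro k
        rw [Fintype.sum_bool, hFedge v k true, hFedge v k false]
        ring
      rw [Finset.sum_congr rfl fun k _ => h1 k]
      rw [← Finset.mul_sum]
      have h2 : ∑ k : Fin (5 ^ m + 1), |a v ((k:ℕ) + 1) - a v (k:ℕ)| ^ p
          = ∑ k ∈ Finset.range (5 ^ m + 1), |a v (k + 1) - a v k| ^ p := by
        rw [← Fin.sum_univ_eq_sum_range]
      rw [h2]
      have h3 := chain_holder (5 ^ m + 1) (by omega) hp (a v) (ha0 v) (haN v)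
      have hcast : ((5 ^ m + 1 : ℕ) : ℝ) = (5:ℝ) ^ m + 1 := by push_cast; ring
      rw [hcast] at h3
      have hpos : (0:ℝ) ≤ ((5:ℝ) ^ m + 1) ^ (1 - p) := by positivity
      linarith
    have hsum : ∑ v : Fin m → Bool, ∑ k : Fin (5 ^ m + 1), ∑ b : Bool, F (ψ (v, k, b))
        ≥ ∑ v : Fin m → Bool, 2 * (((5:ℝ) ^ m + 1) ^ (1 - p)) :=
      Finset.sum_le_sum fun v _ => hrow v
    have hcard : ∑ v : Fin m → Bool, 2 * (((5:ℝ) ^ m + 1) ^ (1 - p))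
        = (2:ℝ) ^ m * (((5:ℝ) ^ m + 1) ^ (1 - p)) * 2 := by
      rw [Finset.sum_const, Finset.card_univ]
      have : Fintype.card (Fin m → Bool) = 2 ^ m := by
        rw [Fintype.card_fun]
        simp
      rw [this]
      rw [nsmul_eq_mul]
      push_cast
      ring
    calc (2:ℝ) ^ m * (((5:ℝ) ^ m + 1) ^ (1 - p)) * 2
        = ∑ v : Fin m → Bool, 2 * (((5:ℝ) ^ m + 1) ^ (1 - p)) := hcard.symm
      _ ≤ ∑ v : Fin m → Bool, ∑ k : Fin (5 ^ m + 1), ∑ b : Bool, F (ψ (v, k, b)) := hsum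
      _ = ∑ w : (Fin m → Bool) × Fin (5 ^ m + 1) × Bool, F (ψ w) := hsplit.symm
      _ = ∑ z ∈ Finset.image ψ Finset.univ, F z := heval.symm
      _ ≤ ∑ z : ↥T × ↥T, F z := himg
  -- assemble
  rw [energy]
  simp only [tsum_fintype]
  show (2:ℝ) ^ m * ((5:ℝ) ^ m + 1) ^ (1 - p) ≤ 1 / 2 * ∑ Q : ↥T, ∑ Q' : ↥T, F (Q, Q')
  rw [← Fintype.sum_prod_type]
  linarith [hbig]

end Aux

/-- Lower bound on the conductance of the corner cube `Q₁ = [0,1/5]²` in `F⁽²⁾`. -/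
theorem statement2 (p : ℝ) (hp : 1 < p) (m : ℕ) (hm : 1 ≤ m) :
    (2 : ℝ) ^ m * (5 ^ m + 1 : ℝ) ^ (1 - p) ≤
      conduct 2 1 m p {Qone 2} (GamC 2 1 (Qone 2)) := by
  rw [conduct]
  apply le_csInf
  · classical
    refine ⟨energy 2 (1 + m) p (fun Q => if Q ∈ Sm 2 1 m {Qone 2} then 1 else 0),
      fun Q => if Q ∈ Sm 2 1 m {Qone 2} then 1 else 0,
      fun Q hQ => if_pos hQ, fun Q hQ => ?_, rfl⟩
    show (if Q ∈ Sm 2 1 m {Qone 2} then (1:ℝ) else 0) = 0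
    rw [if_neg]
    intro hQ1
    obtain ⟨hQcol, Q', hQ'GamC, hsubQ'⟩ := hQ
    obtain ⟨-, Q'', hQ''mem, hsubQ''⟩ := hQ1
    rw [Set.mem_singleton_iff] at hQ''mem
    subst hQ''mem
    obtain ⟨⟨l, hl, rfl⟩, -⟩ := hQcol
    have hz : p2 ((l 0 : ℝ) / 5 ^ (1 + m)) ((l 1 : ℝ) / 5 ^ (1 + m)) ∈ cube 2 (1 + m) l :=
      corner_mem_cube l
    obtain ⟨hQ'col, hQ'not⟩ := hQ'GamC
    exact hQ'not ⟨hQ'col, _, hsubQ' hz, hsubQ'' hz⟩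
  · rintro b ⟨f, hf1, hf0, rfl⟩
    exact energy_lower_bound p hp m hm f hf1 hf0
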